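/- arXiv:1608.02788 — 6 statements merged into one kernel-verified Lean document; each statement's English description precedes it below -/
import Mathlib

section
/- Let F be a field and x an element of a finite field extension of F. Then there exists a positive integer m such that the intersection of the fields F(x^n) over all positive integers n equals F(x^m). -/
open IntermediateField

/-- Let `F` be a field and `x` an element of a finite field extension `L` of `F`.
Then there exists a positive integer `m` such that the intersection of the fields
`F(xⁿ)` over all positive integers `n` equals `F(x^m)`. -/
theorem stmt0 {F L : Type*} [Field F] [Field L] [Algebra F L] [FiniteDimensional F L]
    (x : L) :
    ∃ m : ℕ, 0 < m ∧ (⨅ (n : ℕ) (_ : 0 < n), F⟮x ^ n⟯) = F⟮x ^ m⟯ := by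
  classical
  have hP : ∃ d : ℕ, ∃ n : ℕ, 0 < n ∧ Module.finrank F F⟮x ^ n⟯ = d :=
    ⟨Module.finrank F F⟮x ^ 1⟯, 1, one_pos, rfl⟩
  obtain ⟨m, hm, hrank⟩ := Nat.find_spec hP
  refine ⟨m, hm, le_antisymm (iInf_le_of_le m (iInf_le _ hm)) (le_iInf fun k => le_iInf fun hk => ?_)⟩
  -- F⟮x^(m*k)⟯ ≤ F⟮x^m⟯ and has minimal finrank, so equal; also ≤ F⟮x^k⟯
  have h1 : F⟮x ^ (m * k)⟯ ≤ F⟮x ^ m⟯ := by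
    rw [adjoin_simple_le_iff, pow_mul]
    exact pow_mem (mem_adjoin_simple_self F (x ^ m)) k
  have h2 : F⟮x ^ (m * k)⟯ ≤ F⟮x ^ k⟯ := by
    rw [adjoin_simple_le_iff, mul_comm, pow_mul]
    exact pow_mem (mem_adjoin_simple_self F (x ^ k)) m
  have hmin : Nat.find hP ≤ Module.finrank F F⟮x ^ (m * k)⟯ :=
    Nat.find_min' hP ⟨m * k, Nat.mul_pos hm hk, rfl⟩
  have heq : F⟮x ^ (m * k)⟯ = F⟮x ^ m⟯ :=
    IntermediateField.eq_of_le_of_finrank_le h1 (hrank ▸ hmin)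
  exact heq ▸ h2
end

section
/- Let F be a field, L/F a finite extension, and x ∈ L. If m is a positive integer minimizing the degree [F(x^m) : F] among all positive integers, then F(x^m) ⊆ F(x^n) for every positive integer n. -/
open IntermediateField

/-- Let `F` be a field, `L/F` a finite extension, and `x ∈ L`. If `m` is a positive
integer minimizing the degree `[F(x^m) : F]` among all positive integers, then
`F(x^m) ⊆ F(xⁿ)` for every positive integer `n`. -/
theorem stmt1 {F L : Type*} [Field F] [Field L] [Algebra F L] [FiniteDimensional F L]
    (x : L) (m : ℕ) (hm : 0 < m)
    (hmin : ∀ n : ℕ, 0 < n →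
      Module.finrank F F⟮x ^ m⟯ ≤ Module.finrank F F⟮x ^ n⟯) :
    ∀ n : ℕ, 0 < n → F⟮x ^ m⟯ ≤ F⟮x ^ n⟯ := by
  intro n hn
  have h1 : F⟮x ^ (m * n)⟯ ≤ F⟮x ^ m⟯ := by
    rw [adjoin_simple_le_iff, pow_mul]
    exact pow_mem (mem_adjoin_simple_self F (x ^ m)) n
  have h2 : F⟮x ^ (m * n)⟯ ≤ F⟮x ^ n⟯ := by
    rw [adjoin_simple_le_iff, mul_comm, pow_mul]
    exact pow_mem (mem_adjoin_simple_self F (x ^ n)) m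
  have heq : F⟮x ^ (m * n)⟯ = F⟮x ^ m⟯ :=
    IntermediateField.eq_of_le_of_finrank_le h1 (hmin (m * n) (Nat.mul_pos hm hn))
  exact heq ▸ h2
end

section
/- Let A be a Dedekind domain with distinct maximal ideals 𝔭 and 𝔮. Let M, N₁, N₂ be torsion-free A-modules and f₁ : M → N₁, f₂ : M → N₂ injective A-linear maps such that every element of the torsion submodule of coker(f₁) is annihilated by a power of 𝔭, and every element of the torsion submodule of coker(f₂) is annihilated by a power of 𝔮. Then the image of (f₁, f₂) : M → N₁ × N₂ is saturated, i.e. coker((f₁,f₂)) is torsion free. -/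
/-- Let `A` be a Dedekind domain with distinct maximal ideals `𝔭` and `𝔮`. Let
`M, N₁, N₂` be torsion-free `A`-modules and `f₁ : M → N₁`, `f₂ : M → N₂` injective
`A`-linear maps such that every torsion element of `coker f₁` is annihilated by a
power of `𝔭` and every torsion element of `coker f₂` is annihilated by a power of `𝔮`.
Then the image of `(f₁, f₂) : M → N₁ × N₂` is saturated, i.e. its cokernel is
torsion free. -/
theorem stmt4 {A : Type*} [CommRing A] [IsDomain A] [IsDedekindDomain A]
    (𝔭 𝔮 : Ideal A) (hp : 𝔭.IsMaximal) (hq : 𝔮.IsMaximal) (hpq : 𝔭 ≠ 𝔮)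
    {M N₁ N₂ : Type*} [AddCommGroup M] [Module A M]
    [AddCommGroup N₁] [Module A N₁] [AddCommGroup N₂] [Module A N₂]
    [NoZeroSMulDivisors A M] [NoZeroSMulDivisors A N₁] [NoZeroSMulDivisors A N₂]
    (f₁ : M →ₗ[A] N₁) (f₂ : M →ₗ[A] N₂)
    (h₁ : Function.Injective f₁) (h₂ : Function.Injective f₂)
    (ht₁ : ∀ x : N₁ ⧸ LinearMap.range f₁,
      (∃ a : A, a ≠ 0 ∧ a • x = 0) → ∃ k : ℕ, ∀ a ∈ 𝔭 ^ k, a • x = 0)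
    (ht₂ : ∀ x : N₂ ⧸ LinearMap.range f₂,
      (∃ a : A, a ≠ 0 ∧ a • x = 0) → ∃ k : ℕ, ∀ a ∈ 𝔮 ^ k, a • x = 0) :
    ∀ (x : (N₁ × N₂) ⧸ LinearMap.range (f₁.prod f₂)) (a : A),
      a ≠ 0 → a • x = 0 → x = 0 := by
  intro x a ha hax
  obtain ⟨⟨n₁, n₂⟩, rfl⟩ := Submodule.Quotient.mk_surjective _ x
  rw [← Submodule.Quotient.mk_smul, Submodule.Quotient.mk_eq_zero] at hax
  obtain ⟨m, hm⟩ := hax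
  have hm1 : f₁ m = a • n₁ := congrArg Prod.fst hm
  have hm2 : f₂ m = a • n₂ := congrArg Prod.snd hm
  obtain ⟨k, hk⟩ := ht₁ (Submodule.Quotient.mk n₁) ⟨a, ha, by
    rw [← Submodule.Quotient.mk_smul, Submodule.Quotient.mk_eq_zero]; exact ⟨m, hm1⟩⟩
  obtain ⟨l, hl⟩ := ht₂ (Submodule.Quotient.mk n₂) ⟨a, ha, by
    rw [← Submodule.Quotient.mk_smul, Submodule.Quotient.mk_eq_zero]; exact ⟨m, hm2⟩⟩
  have hco : IsCoprime (𝔭 ^ k) (𝔮 ^ l) :=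
    (Ideal.isCoprime_iff_sup_eq.mpr (Ideal.IsMaximal.coprime_of_ne hp hq hpq)).pow
  obtain ⟨p, hpmem, q, hqmem, hpq1⟩ := Ideal.isCoprime_iff_exists.mp hco
  have h1 := hk p hpmem
  rw [← Submodule.Quotient.mk_smul, Submodule.Quotient.mk_eq_zero] at h1
  obtain ⟨u, hu⟩ := h1
  have h2 := hl q hqmem
  rw [← Submodule.Quotient.mk_smul, Submodule.Quotient.mk_eq_zero] at h2
  obtain ⟨v, hv⟩ := h2
  have hpm : p • m = a • u := h₁ <| by
    rw [map_smul, map_smul, hu, hm1, smul_comm]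
  have hqm : q • m = a • v := h₂ <| by
    rw [map_smul, map_smul, hv, hm2, smul_comm]
  have hmav : m = a • (u + v) := by
    have : (p + q) • m = a • (u + v) := by
      rw [add_smul, smul_add, hpm, hqm]
    simpa [hpq1] using this
  have hn1 : n₁ = f₁ (u + v) := by
    apply smul_right_injective N₁ ha
    show a • n₁ = a • f₁ (u + v)
    rw [← hm1, hmav, map_smul]
  have hn2 : n₂ = f₂ (u + v) := by
    apply smul_right_injective N₂ ha
    show a • n₂ = a • f₂ (u + v)
    rw [← hm2, hmav, map_smul]
  rw [Submodule.Quotient.mk_eq_zero]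
  exact ⟨u + v, Prod.ext hn1.symm hn2.symm⟩
end

section
/- Let A be a Dedekind domain, Q a torsion-free A-module, and P ⊆ Q a saturated submodule. Then for every maximal ideal 𝔭 of A, the induced map P/𝔭P → Q/𝔭Q is injective. -/
/-- Let `A` be a Dedekind domain, `Q` a torsion-free `A`-module, and `P ⊆ Q` a saturated
submodule (i.e. `Q/P` is torsion free: `a • q ∈ P` with `a ≠ 0` implies `q ∈ P`).
Then for every maximal ideal `𝔭` of `A`, the induced map `P/𝔭P → Q/𝔭Q` is injective,
equivalently `P ⊓ 𝔭Q = 𝔭P`. -/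
theorem stmt5 {A : Type*} [CommRing A] [IsDomain A] [IsDedekindDomain A]
    {Q : Type*} [AddCommGroup Q] [Module A Q] [NoZeroSMulDivisors A Q]
    (P : Submodule A Q) (hsat : ∀ (a : A) (q : Q), a ≠ 0 → a • q ∈ P → q ∈ P)
    (𝔭 : Ideal A) (hm : 𝔭.IsMaximal) :
    P ⊓ 𝔭 • (⊤ : Submodule A Q) = 𝔭 • P := by
  apply le_antisymm
  · -- hard direction
    rcases eq_or_ne 𝔭 ⊥ with h𝔭 | h𝔭
    · simp [h𝔭]
    · obtain ⟨a, ha𝔭, ha0⟩ := Submodule.exists_mem_ne_zero_of_ne_bot h𝔭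
      -- span {a} ≤ 𝔭, so 𝔭 ∣ span {a}
      have hle : Ideal.span {a} ≤ 𝔭 := by
        rw [Ideal.span_le, Set.singleton_subset_iff]; exact ha𝔭
      obtain ⟨J, hJ⟩ : 𝔭 ∣ Ideal.span {a} := Ideal.dvd_iff_le.mpr hle
      rintro x ⟨hxP, hxQ⟩
      -- for every b ∈ J, b • x ∈ a • Q
      have key : ∀ b ∈ J, ∃ q : Q, b • x = a • q := by
        intro b hb
        have : ∀ x ∈ 𝔭 • (⊤ : Submodule A Q), ∀ b ∈ J, ∃ q : Q, b • x = a • q := by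
          intro x hx
          refine Submodule.smul_induction_on hx ?_ ?_
          · intro p hp q _ b hb
            have hmem : b * p ∈ Ideal.span {a} := by
              rw [hJ]; exact mul_comm p b ▸ Ideal.mul_mem_mul hp hb
            obtain ⟨c, hc⟩ := Ideal.mem_span_singleton'.mp hmem
            exact ⟨c • q, by rw [smul_smul, ← hc, mul_comm, mul_smul, smul_smul, mul_comm]⟩
          · intro y z hy hz b hb
            obtain ⟨q₁, hq₁⟩ := hy b hb
            obtain ⟨q₂, hq₂⟩ := hz b hb
            exact ⟨q₁ + q₂, by rw [smul_add, hq₁, hq₂, smul_add]⟩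
        exact this x hxQ b hb
      -- for every c ∈ 𝔭 * J, c • x = a • z with z ∈ 𝔭 • P
      have key2 : ∀ c ∈ 𝔭 * J, ∃ z ∈ 𝔭 • P, c • x = a • z := by
        intro c hc
        refine Submodule.mul_induction_on hc ?_ ?_
        · intro p hp b hb
          obtain ⟨q, hq⟩ := key b hb
          have hqP : q ∈ P := hsat a q ha0 (hq ▸ Submodule.smul_mem P b hxP)
          refine ⟨p • q, Submodule.smul_mem_smul hp hqP, ?_⟩
          rw [mul_smul, hq, smul_smul, smul_smul, mul_comm]
        · rintro y z ⟨z₁, hz₁, h₁⟩ ⟨z₂, hz₂, h₂⟩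
          exact ⟨z₁ + z₂, Submodule.add_mem _ hz₁ hz₂,
            by rw [add_smul, h₁, h₂, smul_add]⟩
      have haJ : a ∈ 𝔭 * J := by
        rw [← hJ]; exact Ideal.mem_span_singleton_self a
      obtain ⟨z, hz, hax⟩ := key2 a haJ
      have : x = z := smul_right_injective Q ha0 hax
      rw [this]; exact hz
  · exact le_inf (Submodule.smul_le.mpr fun a ha q hq => Submodule.smul_mem P a hq)
      (Submodule.smul_mono le_rfl le_top)
end

section
/- Let L be a local field with valuation ring O, uniformizer π, and residue field k. Let L'/L be an unramified extension of degree n with valuation ring O' and residue field k'. Fix α ∈ O' whose residue class generates k' over k, and regard O' ⊆ Mat_n(O) via the regular representation. Then for every i ≥ 1 and every matrix δ ∈ Mat_n(O) with δ ≡ 1 + π^i α (mod π^{i+1} Mat_n(O)), the L-subalgebra of Mat_n(L) generated by δ is a field isomorphic to L'; in particular δ has n distinct eigenvalues generating an unramified extension of degree n of L. -/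
open Polynomial IsLocalRing

section
variable {O : Type*} [CommRing O] [IsDomain O] [IsDiscreteValuationRing O]
  {O' : Type*} [CommRing O'] [IsLocalRing O'] [Algebra O O']

theorem aux_mem_iff {n : ℕ} (B : Module.Basis (Fin n) O O') {π : O}
    (hm' : maximalIdeal O' = Ideal.span {algebraMap O O' π}) (j : ℕ) (x : O') :
    x ∈ (maximalIdeal O' ^ j • ⊤ : Submodule O' O') ↔ ∀ a, π ^ j ∣ B.repr x a := by
  rw [smul_eq_mul, Ideal.mul_top, hm', Ideal.span_singleton_pow, Ideal.mem_span_singleton]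
  constructor
  · rintro ⟨y, rfl⟩ a
    rw [← map_pow, ← Algebra.smul_def, map_smul]
    exact ⟨B.repr y a, rfl⟩
  · intro h
    choose c hc using h
    refine ⟨∑ a, c a • B a, ?_⟩
    rw [← map_pow, ← Algebra.smul_def]
    conv_lhs => rw [← B.sum_repr x]
    rw [Finset.smul_sum]
    refine Finset.sum_congr rfl fun a _ => ?_
    rw [hc a, mul_smul]

theorem aux_memO_iff {π : O} (hπ : Irreducible π) (j : ℕ) (r : O) :
    r ∈ (maximalIdeal O ^ j • ⊤ : Submodule O O) ↔ π ^ j ∣ r := by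
  rw [smul_eq_mul, Ideal.mul_top,
    (IsDiscreteValuationRing.irreducible_iff_uniformizer π).mp hπ,
    Ideal.span_singleton_pow, Ideal.mem_span_singleton]

theorem aux_adic [IsAdicComplete (maximalIdeal O) O]
    (hunram : maximalIdeal O' = Ideal.map (algebraMap O O') (maximalIdeal O))
    {n : ℕ} (B : Module.Basis (Fin n) O O') {π : O} (hπ : Irreducible π) :
    IsAdicComplete (maximalIdeal O') O' := by
  have hm : maximalIdeal O = Ideal.span {π} :=
    (IsDiscreteValuationRing.irreducible_iff_uniformizer π).mp hπ
  have hm' : maximalIdeal O' = Ideal.span {algebraMap O O' π} := by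
    rw [hunram, hm, Ideal.map_span, Set.image_singleton]
  refine { toIsHausdorff := ⟨?_⟩, toIsPrecomplete := ⟨?_⟩ }
  · intro x hx
    have hco : ∀ a, B.repr x a = 0 := by
      intro a
      refine IsHausdorff.haus (inferInstance : IsHausdorff (maximalIdeal O) O) _ fun j => ?_
      rw [SModEq.zero, aux_memO_iff hπ]
      exact ((aux_mem_iff B hm' j x).mp (by simpa [SModEq.zero] using hx j)) a
    have : B.repr x = 0 := Finsupp.ext hco
    simpa using congrArg B.repr.symm this
  · intro f hf
    have hca : ∀ a, ∃ La, ∀ j, B.repr (f j) a ≡ La [SMOD (maximalIdeal O ^ j • ⊤ : Submodule O O)] := by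
      intro a
      refine IsPrecomplete.prec inferInstance (f := fun j => B.repr (f j) a) ?_
      intro m n hmn
      rw [SModEq.sub_mem, aux_memO_iff hπ]
      simpa [map_sub] using ((aux_mem_iff B hm' m (f m - f n)).mp (by simpa [SModEq.sub_mem] using (hf hmn))) a
    choose Lf hLf using hca
    refine ⟨∑ a, Lf a • B a, fun j => ?_⟩
    rw [SModEq.sub_mem]
    rw [aux_mem_iff B hm' j]
    intro a
    have h1 := (hLf a j)
    rw [SModEq.sub_mem, aux_memO_iff hπ] at h1
    simpa [map_sub, Finsupp.sub_apply, B.repr_self, Finsupp.single_apply] using h1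
end

theorem aux_resid {O : Type*} [CommRing O] [IsDomain O] [IsDiscreteValuationRing O]
    {O' : Type*} [CommRing O'] [IsDomain O'] [IsLocalRing O'] [Algebra O O']
    (hunram : maximalIdeal O' = Ideal.map (algebraMap O O') (maximalIdeal O))
    {n : ℕ} (hn : 0 < n) (B : Module.Basis (Fin n) O O') {π : O} (hπ : Irreducible π)
    (α : O')
    (hαgen : ∀ y : O', ∃ q : Polynomial O, y - Polynomial.aeval α q ∈ maximalIdeal O')
    (hαsep : ∃ g : Polynomial O, g.Monic ∧ g.natDegree = n ∧
      Polynomial.aeval α g ∈ maximalIdeal O' ∧ (g.map (residue O)).Separable) :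
    Irreducible ((Algebra.leftMulMatrix B α).charpoly.map (residue O)) ∧
    ((Algebra.leftMulMatrix B α).charpoly.map (residue O)).Separable ∧
    Polynomial.aeval α (Algebra.leftMulMatrix B α).charpoly = 0 ∧
    Polynomial.aeval α (derivative (Algebra.leftMulMatrix B α).charpoly) ∉ maximalIdeal O' := by
  have hm : maximalIdeal O = Ideal.span {π} :=
    (IsDiscreteValuationRing.irreducible_iff_uniformizer π).mp hπ
  have hm' : maximalIdeal O' = Ideal.span {algebraMap O O' π} := by
    rw [hunram, hm, Ideal.map_span, Set.image_singleton]
  set p := (Algebra.leftMulMatrix B α).charpoly with hpdef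
  have hpm : p.Monic := Matrix.charpoly_monic _
  have hpd : p.natDegree = n := by
    simp [hpdef]
  have haev : Polynomial.aeval α p = 0 := by
    have h := Matrix.aeval_self_charpoly (Algebra.leftMulMatrix B α)
    rw [Polynomial.aeval_algHom_apply (Algebra.leftMulMatrix B) α p] at h
    exact Algebra.leftMulMatrix_injective B (by simpa using h)
  -- the residue field algebra
  set k := ResidueField O
  set k' := ResidueField O'
  have hker : ∀ r ∈ maximalIdeal O, ((residue O').comp (algebraMap O O')) r = 0 := by
    intro r hr
    rw [RingHom.comp_apply]
    refine Ideal.Quotient.eq_zero_iff_mem.mpr ?_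
    rw [hunram]
    exact Ideal.mem_map_of_mem _ hr
  let ρ : k →+* k' := Ideal.Quotient.lift (maximalIdeal O) ((residue O').comp (algebraMap O O')) hker
  letI : Algebra k k' := ρ.toAlgebra
  have hρres : ∀ r : O, algebraMap k k' (residue O r) = residue O' (algebraMap O O' r) :=
    fun r => rfl
  have hcomp : (algebraMap k k').comp (residue O) = (residue O').comp (algebraMap O O') :=
    RingHom.ext fun r => rfl
  have hev : ∀ Q : Polynomial O,
      residue O' (Polynomial.aeval α Q)
        = Polynomial.aeval (residue O' α) (Q.map (residue O)) := by
    intro Q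
    calc residue O' (Polynomial.aeval α Q)
        = Q.eval₂ ((residue O').comp (algebraMap O O')) (residue O' α) := by
          rw [Polynomial.aeval_def, Polynomial.hom_eval₂]
      _ = Q.eval₂ ((algebraMap k k').comp (residue O)) (residue O' α) := by rw [hcomp]
      _ = (Q.map (residue O)).eval₂ (algebraMap k k') (residue O' α) :=
          (Polynomial.eval₂_map _ _ _).symm
      _ = Polynomial.aeval (residue O' α) (Q.map (residue O)) := rfl
  have hsmul : ∀ (r : O) (x : O'), residue O' (r • x) = residue O r • residue O' x := by
    intro r x
    rw [Algebra.smul_def, map_mul, Algebra.smul_def, hρres]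
  -- basis of k' over k
  have hli : LinearIndependent k (fun a : Fin n => residue O' (B a)) := by
    rw [Fintype.linearIndependent_iff]
    intro c hc
    choose r hr using fun a => Ideal.Quotient.mk_surjective (I := maximalIdeal O) (c a)
    have h1 : residue O' (∑ a, r a • B a) = 0 := by
      rw [map_sum]
      simp only [hsmul]
      have hr' : ∀ a, residue O (r a) = c a := hr
      simp only [hr']
      exact hc
    have h2 : (∑ a, r a • B a) ∈ maximalIdeal O' := Ideal.Quotient.eq_zero_iff_mem.mp h1
    rw [hm', Ideal.mem_span_singleton] at h2
    obtain ⟨y, hy⟩ := h2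
    have hy' : (∑ a, r a • B a) = ∑ a, (π * B.repr y a) • B a := by
      rw [hy, ← Algebra.smul_def]
      conv_lhs => rw [← B.sum_repr y]
      rw [Finset.smul_sum]
      exact Finset.sum_congr rfl fun a _ => by rw [smul_smul]
    intro a
    have hra : r a = π * B.repr y a := by
      have := congrArg (fun z => B.repr z a) hy'
      simpa [map_sum, Finsupp.single_apply, Finset.sum_ite_eq'] using this
    rw [← hr a, hra]
    exact Ideal.Quotient.eq_zero_iff_mem.mpr (hm ▸ Ideal.mem_span_singleton.mpr ⟨_, rfl⟩)
  have hsp : ⊤ ≤ Submodule.span k (Set.range fun a : Fin n => residue O' (B a)) := by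
    rintro xb -
    obtain ⟨x, rfl⟩ := Ideal.Quotient.mk_surjective (I := maximalIdeal O') xb
    show residue O' x ∈ _
    rw [← B.sum_repr x, map_sum]
    simp only [hsmul]
    exact Submodule.sum_mem _ fun a _ =>
      Submodule.smul_mem _ _ (Submodule.subset_span ⟨a, rfl⟩)
  let Bbar : Module.Basis (Fin n) k k' := Module.Basis.mk hli hsp
  haveI : Module.Finite k k' := Module.Finite.of_basis Bbar
  have hfr : Module.finrank k k' = n := by
    rw [Module.finrank_eq_card_basis Bbar, Fintype.card_fin]
  set αb := residue O' α with hαb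
  have haevb : Polynomial.aeval αb (p.map (residue O)) = 0 := by
    rw [← hev, haev, map_zero]
  have hint : IsIntegral k αb := ⟨p.map (residue O), hpm.map _, haevb⟩
  have hadj : Algebra.adjoin k {αb} = ⊤ := by
    rw [eq_top_iff]
    rintro xb -
    obtain ⟨x, rfl⟩ := Ideal.Quotient.mk_surjective (I := maximalIdeal O') xb
    obtain ⟨qx, hqx⟩ := hαgen x
    have hres : residue O' x = Polynomial.aeval αb (qx.map (residue O)) := by
      rw [← hev]
      have h0 : residue O' (x - Polynomial.aeval α qx) = 0 :=
        Ideal.Quotient.eq_zero_iff_mem.mpr hqx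
      rw [map_sub, sub_eq_zero] at h0
      exact h0
    show residue O' x ∈ _
    rw [hres, Algebra.adjoin_singleton_eq_range_aeval]
    exact ⟨_, rfl⟩
  have htop : IntermediateField.adjoin k {αb} = ⊤ := by
    have h := IntermediateField.adjoin_simple_toSubalgebra_of_isAlgebraic hint.isAlgebraic
    rw [hadj] at h
    exact IntermediateField.toSubalgebra_injective (by rw [h, IntermediateField.top_toSubalgebra])
  have hdeg : (minpoly k αb).natDegree = n := by
    rw [← IntermediateField.adjoin.finrank hint, htop, IntermediateField.finrank_top', hfr]
  have key : ∀ q : Polynomial k, q.Monic → q.natDegree = n →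
      Polynomial.aeval αb q = 0 → q = minpoly k αb := by
    intro q hqm hqd hq0
    obtain ⟨c, hc⟩ := minpoly.dvd k αb hq0
    have hc0 : c ≠ 0 := by
      rintro rfl
      rw [mul_zero] at hc
      exact hqm.ne_zero hc
    have hmp0 : minpoly k αb ≠ 0 := minpoly.ne_zero hint
    have hdeg2 : (minpoly k αb).natDegree + c.natDegree = n := by
      rw [← Polynomial.natDegree_mul hmp0 hc0, ← hc, hqd]
    have hcd : c.natDegree = 0 := by omega
    have hlc : c.leadingCoeff = 1 := by
      have h := congrArg Polynomial.leadingCoeff hc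
      rw [Polynomial.leadingCoeff_mul, (minpoly.monic hint).leadingCoeff, one_mul,
        hqm.leadingCoeff] at h
      exact h.symm
    have hc1 : c = 1 := by
      rw [Polynomial.eq_C_of_natDegree_eq_zero hcd]
      rw [Polynomial.eq_C_of_natDegree_eq_zero hcd, Polynomial.leadingCoeff_C] at hlc
      rw [hlc, map_one]
    rw [hc, hc1, mul_one]
  have hpbar : p.map (residue O) = minpoly k αb :=
    key _ (hpm.map _) (by rw [hpm.natDegree_map, hpd]) haevb
  obtain ⟨g, hgm, hgd, hg0, hgsep⟩ := hαsep
  have hgbar : g.map (residue O) = minpoly k αb := by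
    refine key _ (hgm.map _) (by rw [hgm.natDegree_map, hgd]) ?_
    rw [← hev]
    exact (Ideal.Quotient.eq_zero_iff_mem.mpr hg0 : _)
  have hirr : Irreducible (p.map (residue O)) := by
    rw [hpbar]; exact minpoly.irreducible hint
  have hsep : (p.map (residue O)).Separable := by
    rw [hpbar, ← hgbar]; exact hgsep
  refine ⟨hirr, hsep, haev, ?_⟩
  intro hmem
  have hco : IsCoprime (p.map (residue O)) (derivative (p.map (residue O))) :=
    (Polynomial.separable_def _).mp hsep
  have h2 := hco.map (Polynomial.aeval αb : Polynomial k →ₐ[k] k').toRingHom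
  have h2' : IsCoprime (Polynomial.aeval αb (p.map (residue O)))
      (Polynomial.aeval αb (derivative (p.map (residue O)))) := h2
  rw [haevb] at h2'
  have hu : IsUnit (Polynomial.aeval αb (derivative (p.map (residue O)))) :=
    isCoprime_zero_left.mp h2'
  have hz : residue O' (Polynomial.aeval α (derivative p)) = 0 :=
    Ideal.Quotient.eq_zero_iff_mem.mpr hmem
  rw [hev] at hz
  rw [Polynomial.derivative_map] at hu
  exact hu.ne_zero hz

set_option maxHeartbeats 1600000 in
set_option synthInstance.maxHeartbeats 400000 in
/-- Let `O` be a complete discrete valuation ring with fraction field `L := Frac O`,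
uniformizer `π` and residue field `k`. Let `O'` be the valuation ring of an unramified
extension `L'/L` of degree `n`: `O'` is a local domain, free of rank `n` over `O` (with
basis `B`), whose maximal ideal is generated by that of `O`, and whose residue field `k'`
is generated over `k` by the residue class of `α ∈ O'`, which is separable of degree `n`
over `k`. Regard `O' ⊆ Mat_n(O)` via the (left) regular representation in the basis `B`.
Then for every `i ≥ 1` and every `δ ∈ Mat_n(O)` with `δ ≡ 1 + π^i α (mod π^{i+1})`,
the `L`-subalgebra of `Mat_n(L)` generated by `δ` is a field isomorphic to `L'`;
in particular `δ` has `n` distinct eigenvalues generating an extension of degree `n`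
of `L` (its minimal polynomial is irreducible and separable of degree `n`). -/
theorem stmt10 {O : Type*} [CommRing O] [IsDomain O] [IsDiscreteValuationRing O]
    [IsAdicComplete (maximalIdeal O) O]
    {O' : Type*} [CommRing O'] [IsDomain O'] [IsLocalRing O'] [Algebra O O']
    (hunram : maximalIdeal O' = Ideal.map (algebraMap O O') (maximalIdeal O))
    {n : ℕ} (hn : 0 < n) (B : Module.Basis (Fin n) O O')
    (π : O) (hπ : Irreducible π)
    (α : O')
    (hαgen : ∀ y : O', ∃ q : Polynomial O, y - Polynomial.aeval α q ∈ maximalIdeal O')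
    (hαsep : ∃ g : Polynomial O, g.Monic ∧ g.natDegree = n ∧
      Polynomial.aeval α g ∈ maximalIdeal O' ∧
      (g.map (IsLocalRing.residue O)).Separable)
    (i : ℕ) (hi : 1 ≤ i)
    (δ : Matrix (Fin n) (Fin n) O)
    (hδ : ∀ a b : Fin n,
      δ a b - (Algebra.leftMulMatrix B (1 + algebraMap O O' π ^ i * α)) a b
        ∈ Ideal.span {π ^ (i + 1)}) :
    IsField (Algebra.adjoin (FractionRing O)
        {(δ.map (algebraMap O (FractionRing O)))} : Subalgebra (FractionRing O)
        (Matrix (Fin n) (Fin n) (FractionRing O))) ∧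
    Nonempty ((Algebra.adjoin (FractionRing O)
        {(δ.map (algebraMap O (FractionRing O)))} : Subalgebra (FractionRing O)
        (Matrix (Fin n) (Fin n) (FractionRing O))) ≃+* FractionRing O') ∧
    (minpoly (FractionRing O) (δ.map (algebraMap O (FractionRing O)))).natDegree = n ∧
    Irreducible (minpoly (FractionRing O) (δ.map (algebraMap O (FractionRing O)))) ∧
    (minpoly (FractionRing O) (δ.map (algebraMap O (FractionRing O)))).Separable := by
  classical
  set L := FractionRing O
  set ι := algebraMap O L with hιdef
  have hιinj : Function.Injective ι := IsFractionRing.injective O L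
  haveI : Nonempty (Fin n) := ⟨⟨0, hn⟩⟩
  set δL : Matrix (Fin n) (Fin n) L := δ.map ι with hδL
  have hm : maximalIdeal O = Ideal.span {π} :=
    (IsDiscreteValuationRing.irreducible_iff_uniformizer π).mp hπ
  have hm' : maximalIdeal O' = Ideal.span {algebraMap O O' π} := by
    rw [hunram, hm, Ideal.map_span, Set.image_singleton]
  -- the matrix E and β
  have hE : ∀ a b : Fin n, ∃ c : O,
      δ a b - (Algebra.leftMulMatrix B (1 + algebraMap O O' π ^ i * α)) a b = π ^ (i + 1) * c :=
    fun a b => Ideal.mem_span_singleton.mp (hδ a b)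
  choose E hEspec using hE
  set β : Matrix (Fin n) (Fin n) O := Algebra.leftMulMatrix B α + π • Matrix.of E with hβdef
  have hδβ : δ = 1 + (π ^ i) • β := by
    ext a b
    have h1 : Algebra.leftMulMatrix B (1 + algebraMap O O' π ^ i * α)
        = 1 + (π ^ i) • Algebra.leftMulMatrix B α := by
      rw [map_add, map_one]
      congr 1
      rw [← map_pow, ← Algebra.smul_def, map_smul]
    have h2 := hEspec a b
    rw [h1] at h2
    simp only [Matrix.add_apply, Matrix.smul_apply, smul_eq_mul, hβdef, Matrix.of_apply] at h2 ⊢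
    linear_combination h2
  set p := (Algebra.leftMulMatrix B α).charpoly with hpdef
  obtain ⟨hirrP, hsepP, haevP, hderP⟩ := aux_resid hunram hn B hπ α hαgen hαsep
  set f := β.charpoly with hfdef
  have hfm : f.Monic := Matrix.charpoly_monic _
  have hfd : f.natDegree = n := by simp [hfdef]
  have hfp : f.map (residue O) = p.map (residue O) := by
    rw [hfdef, hpdef, ← Matrix.charpoly_map, ← Matrix.charpoly_map]
    congr 1
    ext a b
    simp only [Matrix.map_apply, hβdef, Matrix.add_apply, Matrix.smul_apply, smul_eq_mul,
      map_add, map_mul]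
    have : residue O π = 0 := Ideal.Quotient.eq_zero_iff_mem.mpr (hm ▸ Ideal.mem_span_singleton_self π)
    rw [this, zero_mul, add_zero]
  have hfirr : Irreducible f := hfm.irreducible_of_irreducible_map (residue O) f (hfp ▸ hirrP)
  have hfLirr : Irreducible (f.map ι) := (hfm.irreducible_iff_irreducible_map_fraction_map).mp hfirr
  have hfLm : (f.map ι).Monic := hfm.map ι
  have hfLd : (f.map ι).natDegree = n := by rw [hfm.natDegree_map, hfd]
  have hpm2 : p.Monic := Matrix.charpoly_monic _
  have hpd2 : p.natDegree = n := by simp [hpdef]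
  -- derivative of f is nonzero
  have hderfbar : derivative (p.map (residue O)) ≠ 0 := by
    intro h0
    have hco := (Polynomial.separable_def _).mp hsepP
    rw [h0] at hco
    have hu := isCoprime_zero_right.mp hco
    have hdg := Polynomial.natDegree_eq_zero_of_isUnit hu
    rw [hpm2.natDegree_map, hpd2] at hdg
    omega
  have hderf0 : derivative f ≠ 0 := by
    intro h0
    apply hderfbar
    rw [← hfp, Polynomial.derivative_map, h0, Polynomial.map_zero]
  have hderf : derivative (f.map ι) ≠ 0 := by
    rw [Polynomial.derivative_map]
    intro h
    exact hderf0 (by rwa [Polynomial.map_eq_zero_iff hιinj] at h)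
  -- the polynomial q
  have hπ0 : π ≠ 0 := hπ.ne_zero
  set d : L := ι (π ^ i) with hddef
  have hd0 : d ≠ 0 := by
    simp only [hddef, ne_eq, map_eq_zero_iff ι hιinj]
    exact pow_ne_zero i hπ0
  set u : L := d⁻¹ with hudef
  have hu0 : u ≠ 0 := inv_ne_zero hd0
  have hud : u * d = 1 := inv_mul_cancel₀ hd0
  haveI : Invertible u := invertibleOfNonzero hu0
  set e : Polynomial L ≃ₐ[L] Polynomial L := algEquivCMulXAddC u (-u) with hedef
  set q : Polynomial L := Polynomial.C (d ^ n) * ((f.map ι).comp (Polynomial.C u * Polynomial.X + Polynomial.C (-u))) with hqdef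
  have hecomp : ∀ w : Polynomial L,
      e w = w.comp (Polynomial.C u * Polynomial.X + Polynomial.C (-u)) := fun w => rfl
  have heq : e (f.map ι) = (f.map ι).comp (Polynomial.C u * Polynomial.X + Polynomial.C (-u)) :=
    hecomp _
  have hrlin_deg : (Polynomial.C u * Polynomial.X + Polynomial.C (-u)).natDegree = 1 :=
    Polynomial.natDegree_linear hu0
  have hrlin_lc : (Polynomial.C u * Polynomial.X + Polynomial.C (-u)).leadingCoeff = u :=
    Polynomial.leadingCoeff_linear hu0
  have hq_monic : q.Monic := by
    show q.leadingCoeff = 1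
    rw [hqdef, Polynomial.leadingCoeff_mul, Polynomial.leadingCoeff_C,
      Polynomial.leadingCoeff_comp (by rw [hrlin_deg]; exact one_ne_zero), hrlin_lc,
      hfLm.leadingCoeff, hfLd, one_mul, ← mul_pow, mul_inv_cancel₀ hd0, one_pow]
  have hq_deg : q.natDegree = n := by
    rw [hqdef, Polynomial.natDegree_C_mul (pow_ne_zero n hd0), Polynomial.natDegree_comp,
      hrlin_deg, hfLd, mul_one]
  have hβL : δL = 1 + d • (β.map ι) := by
    ext a b
    conv_lhs => rw [hδL, hδβ]
    simp only [Matrix.map_apply, Matrix.add_apply, Matrix.smul_apply, Matrix.one_apply,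
      smul_eq_mul, map_add, map_mul, map_pow, apply_ite ι, map_one, map_zero, hddef]
  have hCH : (β.map ι).charpoly = f.map ι := Matrix.charpoly_map β ι
  have hq_aeval : Polynomial.aeval δL q = 0 := by
    have h1 : Polynomial.aeval δL (Polynomial.C u * Polynomial.X + Polynomial.C (-u))
        = β.map ι := by
      rw [map_add, map_mul, Polynomial.aeval_C, Polynomial.aeval_X, Polynomial.aeval_C, map_neg,
        ← Algebra.smul_def, hβL]
      rw [smul_add, smul_smul, hud, one_smul, Algebra.algebraMap_eq_smul_one]
      abel
    rw [hqdef, map_mul, Polynomial.aeval_C, Polynomial.aeval_comp, h1, ← hCH,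
      Matrix.aeval_self_charpoly, mul_zero]
  have hq_irr : Irreducible q := by
    have h1 : Irreducible (e (f.map ι)) := (MulEquiv.irreducible_iff e).mpr hfLirr
    rw [heq] at h1
    have hC : IsUnit (Polynomial.C (d ^ n) : Polynomial L) :=
      Polynomial.isUnit_C.mpr (isUnit_iff_ne_zero.mpr (pow_ne_zero n hd0))
    have hassoc : Associated ((f.map ι).comp (Polynomial.C u * Polynomial.X + Polynomial.C (-u))) q :=
      ⟨hC.unit, by rw [IsUnit.unit_spec, mul_comm, hqdef]⟩
    exact hassoc.irreducible h1
  have hq_sep : q.Separable := by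
    rw [Polynomial.separable_iff_derivative_ne_zero hq_irr]
    have hd1 : derivative q = Polynomial.C (d ^ n) *
        (derivative (Polynomial.C u * Polynomial.X + Polynomial.C (-u)) *
          (derivative (f.map ι)).comp (Polynomial.C u * Polynomial.X + Polynomial.C (-u))) := by
      rw [hqdef, Polynomial.derivative_C_mul, Polynomial.derivative_comp]
    have hd2 : derivative (Polynomial.C u * Polynomial.X + Polynomial.C (-u))
        = Polynomial.C u := by
      simp
    have hd3 : (derivative (f.map ι)).comp (Polynomial.C u * Polynomial.X + Polynomial.C (-u)) ≠ 0 := by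
      rw [← hecomp]
      intro h
      exact hderf (e.injective (by rw [h, map_zero]))
    rw [hd1, hd2]
    exact mul_ne_zero (fun h => pow_ne_zero n hd0 (by simpa using (Polynomial.C_eq_zero.mp h)))
      (mul_ne_zero (fun h => hu0 (Polynomial.C_eq_zero.mp h)) hd3)
  haveI : Nontrivial (Matrix (Fin n) (Fin n) L) := by infer_instance
  have hq_min : minpoly L δL = q := (minpoly.eq_of_irreducible_of_monic hq_irr hq_aeval hq_monic).symm
  -- the adjoined subalgebra is isomorphic to AdjoinRoot q
  haveI : Fact (Irreducible q) := ⟨hq_irr⟩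
  set A := Algebra.adjoin L ({δL} : Set (Matrix (Fin n) (Fin n) L)) with hAdef
  letI : CommRing A := Algebra.adjoinCommRingOfComm L (by rintro x rfl y rfl; rfl)
  set δA : A := ⟨δL, Algebra.subset_adjoin (Set.mem_singleton _)⟩ with hδAdef
  have hvalaev : ∀ P : Polynomial L,
      ((Polynomial.aeval δA P : A) : Matrix (Fin n) (Fin n) L) = Polynomial.aeval δL P := by
    intro P
    have h := Polynomial.aeval_algHom_apply A.val δA P
    calc ((Polynomial.aeval δA P : A) : Matrix (Fin n) (Fin n) L)
        = A.val (Polynomial.aeval δA P) := rfl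
      _ = Polynomial.aeval (A.val δA) P := h.symm
      _ = Polynomial.aeval δL P := rfl
  have hq_aevalA : Polynomial.aeval δA q = 0 := by
    apply Subtype.ext
    rw [hvalaev]
    exact hq_aeval
  set ψ := AdjoinRoot.liftAlgHom q (Algebra.ofId L A) δA hq_aevalA with hψdef
  have hψinj : Function.Injective ψ := ψ.toRingHom.injective
  have hψsurj : Function.Surjective ψ := by
    rintro ⟨z, hz⟩
    rw [hAdef, Algebra.adjoin_singleton_eq_range_aeval] at hz
    obtain ⟨P, hP⟩ := hz
    refine ⟨AdjoinRoot.mk q P, ?_⟩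
    apply Subtype.ext
    change ((Polynomial.aeval δA P : A) : Matrix (Fin n) (Fin n) L) = z
    rw [hvalaev]
    exact hP
  have e1 : AdjoinRoot q ≃ₐ[L] A := AlgEquiv.ofBijective ψ ⟨hψinj, hψsurj⟩
  -- the fraction field of O'
  have hOO'inj : Function.Injective (algebraMap O O') := B.algebraMap_injective
  set K' := FractionRing O' with hK'def
  set ι' := algebraMap O' K' with hι'def
  have hι'inj : Function.Injective ι' := IsFractionRing.injective O' K'
  set g0 : O →+* K' := ι'.comp (algebraMap O O') with hg0def
  have hg0u : ∀ y : nonZeroDivisors O, IsUnit (g0 y) := by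
    intro y
    apply isUnit_iff_ne_zero.mpr
    intro h
    have h0 : (y : O) = 0 := hOO'inj (hι'inj (by
      rw [show ι' (algebraMap O O' y) = g0 y from rfl, h, map_zero, map_zero]))
    exact mem_nonZeroDivisors_iff_ne_zero.mp y.2 h0
  set Φ : L →+* K' := IsLocalization.lift (M := nonZeroDivisors O) (S := L) hg0u with hΦdef
  have hΦι : ∀ r : O, Φ (ι r) = g0 r := fun r => IsLocalization.lift_eq hg0u r
  -- Hensel's lemma in O'
  haveI hadic := aux_adic hunram B hπ
  have hH : HenselianRing O' (maximalIdeal O') := inferInstance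
  set fO' := f.map (algebraMap O O') with hfO'def
  have hfO'm : fO'.Monic := hfm.map _
  have hcoeffdvd : Polynomial.C π ∣ (f - p) := by
    rw [Polynomial.C_dvd_iff_dvd_coeff]
    intro j
    have hres0 : residue O ((f - p).coeff j) = 0 := by
      have := congrArg (fun w => Polynomial.coeff w j) hfp
      simp only [Polynomial.coeff_map] at this
      rw [Polynomial.coeff_sub, map_sub, this, sub_self]
    rw [← Ideal.mem_span_singleton, ← hm]
    exact Ideal.Quotient.eq_zero_iff_mem.mp hres0
  obtain ⟨h₂, hh₂⟩ := hcoeffdvd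
  have hfsplit : f = p + Polynomial.C π * h₂ := by rw [← hh₂]; ring
  have haevf : Polynomial.aeval α f
      = algebraMap O O' π * Polynomial.aeval α h₂ := by
    rw [hfsplit, map_add, map_mul, Polynomial.aeval_C, haevP, zero_add]
  have hroot1 : fO'.eval α ∈ maximalIdeal O' := by
    have : fO'.eval α = Polynomial.aeval α f := by
      rw [hfO'def, Polynomial.eval_map, Polynomial.aeval_def]
    rw [this, haevf, hm']
    exact Ideal.mul_mem_right _ _ (Ideal.mem_span_singleton_self _)
  have hroot2 : IsUnit (Ideal.Quotient.mk (maximalIdeal O') ((derivative fO').eval α)) := by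
    have hder : (derivative fO').eval α = Polynomial.aeval α (derivative f) := by
      rw [hfO'def, Polynomial.derivative_map, Polynomial.eval_map, Polynomial.aeval_def]
    have hdf : derivative f = derivative p + Polynomial.C π * derivative h₂ := by
      rw [hfsplit, derivative_add, Polynomial.derivative_C_mul]
    have hnot : (derivative fO').eval α ∉ maximalIdeal O' := by
      rw [hder, hdf, map_add, map_mul, Polynomial.aeval_C]
      intro hmem
      apply hderP
      have h3 : algebraMap O O' π * Polynomial.aeval α (derivative h₂) ∈ maximalIdeal O' := by
        rw [hm']
        exact Ideal.mul_mem_right _ _ (Ideal.mem_span_singleton_self _)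
      have h4 := Ideal.sub_mem _ hmem h3
      simpa using h4
    letI : Field (O' ⧸ maximalIdeal O') := Ideal.Quotient.field (maximalIdeal O')
    exact isUnit_iff_ne_zero.mpr fun h => hnot (Ideal.Quotient.eq_zero_iff_mem.mp h)
  obtain ⟨a, haroot, haα⟩ := hH.is_henselian fO' hfO'm α hroot1 hroot2
  have haf : Polynomial.aeval a f = 0 := by
    have : fO'.eval a = 0 := haroot
    rwa [hfO'def, Polynomial.eval_map, ← Polynomial.aeval_def] at this
  -- O' = O[a] by Nakayama
  haveI : Module.Finite O O' := Module.Finite.of_basis B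
  have hadj : Algebra.adjoin O ({a} : Set O') = ⊤ := by
    set N := Subalgebra.toSubmodule (Algebra.adjoin O ({a} : Set O')) with hNdef
    have hle : (⊤ : Submodule O O') ≤ N ⊔ (maximalIdeal O) • (⊤ : Submodule O O') := by
      rintro y -
      obtain ⟨qy, hqy⟩ := hαgen y
      have h2 : Polynomial.aeval α qy - Polynomial.aeval a qy ∈ maximalIdeal O' := by
        have hdvd : α - a ∣ (Polynomial.aeval α qy - Polynomial.aeval a qy) := by
          have h5 := Polynomial.sub_dvd_eval_sub α a (qy.map (algebraMap O O'))
          simpa [Polynomial.eval_map, Polynomial.aeval_def] using h5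
        obtain ⟨z, hz⟩ := hdvd
        rw [hz]
        have hαa : α - a ∈ maximalIdeal O' := by
          rw [show α - a = -(a - α) by ring]
          exact neg_mem haα
        exact Ideal.mul_mem_right _ _ hαa
      have h1 : y - Polynomial.aeval a qy ∈ maximalIdeal O' := by
        have h7 := Ideal.add_mem _ hqy h2
        simpa using h7
      have hsplit : y = Polynomial.aeval a qy + (y - Polynomial.aeval a qy) := by ring
      rw [hsplit]
      apply Submodule.add_mem
      · apply Submodule.mem_sup_left
        show Polynomial.aeval a qy ∈ Algebra.adjoin O ({a} : Set O')
        rw [Algebra.adjoin_singleton_eq_range_aeval]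
        exact ⟨qy, rfl⟩
      · apply Submodule.mem_sup_right
        rw [hm'] at h1
        obtain ⟨z, hz⟩ := Ideal.mem_span_singleton.mp h1
        rw [hz, ← Algebra.smul_def]
        exact Submodule.smul_mem_smul (by rw [hm]; exact Ideal.mem_span_singleton_self π)
          Submodule.mem_top
    have hsm : (maximalIdeal O) • (⊤ : Submodule O O') ≤ N :=
      Submodule.smul_le_of_le_smul_of_le_jacobson_bot Module.Finite.fg_top
        (le_of_eq (IsLocalRing.jacobson_eq_maximalIdeal (⊥ : Ideal O) bot_ne_top).symm) hle
    have hNtop : N = ⊤ := eq_top_iff.mpr (le_trans hle (sup_le le_rfl hsm))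
    exact Algebra.toSubmodule_eq_top.mp hNtop
  -- root of q in K'
  set x₀ : K' := 1 + Φ d * ι' a with hx₀def
  have hΦud : Φ u * Φ d = 1 := by rw [← map_mul, hud, map_one]
  have hcomp2 : Φ.comp ι = g0 := RingHom.ext fun r => hΦι r
  have hx₀root : q.eval₂ Φ x₀ = 0 := by
    rw [hqdef, Polynomial.eval₂_mul, Polynomial.eval₂_C, Polynomial.eval₂_comp]
    have h1 : Polynomial.eval₂ Φ x₀ (Polynomial.C u * Polynomial.X + Polynomial.C (-u))
        = ι' a := by
      rw [Polynomial.eval₂_add, Polynomial.eval₂_mul, Polynomial.eval₂_C, Polynomial.eval₂_X,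
        Polynomial.eval₂_C, hx₀def, map_neg]
      have h8 : Φ u * (1 + Φ d * ι' a) + -Φ u = (Φ u * Φ d) * ι' a := by ring
      rw [h8, hΦud, one_mul]
    have h2 : Polynomial.eval₂ Φ (ι' a) (f.map ι) = ι' (Polynomial.aeval a f) := by
      rw [Polynomial.eval₂_map, hcomp2, hg0def, Polynomial.aeval_def, Polynomial.hom_eval₂]
    rw [h1, h2, haf, map_zero, mul_zero]
  set ψ' : AdjoinRoot q →+* K' := AdjoinRoot.lift Φ x₀ hx₀root with hψ'def
  have hψ'inj : Function.Injective ψ' := ψ'.injective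
  set w : AdjoinRoot q := AdjoinRoot.of q u * (AdjoinRoot.root q - 1) with hwdef
  have hψ'w : ψ' w = ι' a := by
    rw [hwdef, map_mul, map_sub, map_one, hψ'def, AdjoinRoot.lift_of, AdjoinRoot.lift_root,
      hx₀def]
    have h9 : Φ u * (1 + Φ d * ι' a - 1) = (Φ u * Φ d) * ι' a := by ring
    rw [h9, hΦud, one_mul]
  have hψ'O' : ∀ y : O', ∃ v, ψ' v = ι' y := by
    intro y
    have hy : y ∈ Algebra.adjoin O ({a} : Set O') := by rw [hadj]; trivial
    rw [Algebra.adjoin_singleton_eq_range_aeval] at hy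
    obtain ⟨P, hP⟩ := hy
    have hcompψ' : ψ'.comp ((AdjoinRoot.of q).comp ι) = g0 := by
      ext r
      rw [RingHom.comp_apply, RingHom.comp_apply, hψ'def, AdjoinRoot.lift_of]
      exact hΦι r
    refine ⟨Polynomial.eval₂ ((AdjoinRoot.of q).comp ι) w P, ?_⟩
    rw [Polynomial.hom_eval₂, hcompψ', hψ'w, ← hP]
    exact (by rw [Polynomial.aeval_def, Polynomial.hom_eval₂, ← hg0def] :
      ι' (Polynomial.aeval a P) = Polynomial.eval₂ g0 (ι' a) P).symm
  have hψ'surj : Function.Surjective ψ' := by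
    intro x
    obtain ⟨r₀, s₀, hs₀, rfl⟩ := IsFractionRing.div_surjective (A := O') x
    obtain ⟨w1, hw1⟩ := hψ'O' r₀
    obtain ⟨w2, hw2⟩ := hψ'O' s₀
    exact ⟨w1 / w2, by rw [map_div₀, hw1, hw2]⟩
  have e2 : AdjoinRoot q ≃+* K' := RingEquiv.ofBijective ψ' ⟨hψ'inj, hψ'surj⟩
  refine ⟨?_, ?_, by rw [hq_min]; exact hq_deg, by rw [hq_min]; exact hq_irr,
    by rw [hq_min]; exact hq_sep⟩
  · exact MulEquiv.isField (Field.toIsField (AdjoinRoot q)) e1.symm.toMulEquiv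
  · exact ⟨(e1.symm.toRingEquiv).trans e2⟩
end

section
/- Let M be an 𝔽_p[t]-module with a degree function deg : M → ℤ ∪ {-∞} satisfying deg(a·m) = δ·deg_t(a) + deg(m) (δ > 0 a fixed integer) and deg(m+m') ≤ max(deg m, deg m'). For d ∈ ℤ let M_d be the submodule generated by {m ∈ M : deg(m) ≤ d}. Suppose M has an orthogonal basis m₁, …, m_n (i.e. deg(Σ a_i m_i) = max_i deg(a_i m_i) for all a_i ∈ 𝔽_p[t], and the m_i generate M). If M_d has finite index in M (i.e. M/M_d is a finite set), then M_d = M. -/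
/-- Let `M` be an `𝔽_p[t]`-module with a degree function `deg : M → ℤ ∪ {-∞}`
satisfying `deg (a • m) = δ · deg_t a + deg m` (`δ > 0` fixed, `deg m = -∞` iff
`m = 0`) and `deg (m + m') ≤ max (deg m) (deg m')`. For `d ∈ ℤ` let `M_d` be the
submodule generated by `{m : deg m ≤ d}`. Suppose `M` has an orthogonal basis
`m₁, …, m_n`. If `M_d` has finite index in `M`, then `M_d = M`. -/
theorem stmt16 {p : ℕ} [Fact p.Prime] {M : Type*} [AddCommGroup M]
    [Module (Polynomial (ZMod p)) M]
    (deg : M → WithBot ℤ) (δ : ℤ) (hδ : 0 < δ)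
    (hdeg : ∀ (a : Polynomial (ZMod p)) (m : M),
      deg (a • m) = (a.degree.map fun k : ℕ => δ * (k : ℤ)) + deg m)
    (hadd : ∀ m m' : M, deg (m + m') ≤ max (deg m) (deg m'))
    (h0 : ∀ m : M, deg m = ⊥ ↔ m = 0)
    {n : ℕ} (b : Fin n → M) (hne : ∀ i, b i ≠ 0)
    (horth : ∀ a : Fin n → Polynomial (ZMod p),
      deg (∑ i, a i • b i) = Finset.univ.sup fun i => deg (a i • b i))
    (hgen : Submodule.span (Polynomial (ZMod p)) (Set.range b) = ⊤)
    (d : ℤ)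
    (hfin : Finite
      (M ⧸ Submodule.span (Polynomial (ZMod p)) {m : M | deg m ≤ (d : WithBot ℤ)})) :
    Submodule.span (Polynomial (ZMod p)) {m : M | deg m ≤ (d : WithBot ℤ)} = ⊤ := by
  set R := Polynomial (ZMod p)
  set Md := Submodule.span R {m : M | deg m ≤ (d : WithBot ℤ)} with hMdDef
  -- If a coefficient multiplies a basis vector of degree > d into degree ≤ d, it is zero.
  have hcoef : ∀ (a : R) (i : Fin n), (d : WithBot ℤ) < deg (b i) →
      deg (a • b i) ≤ (d : WithBot ℤ) → a = 0 := by
    intro a i hi hle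
    by_contra ha
    have hmap : (0 : WithBot ℤ) ≤ a.degree.map fun k : ℕ => δ * (k : ℤ) := by
      rw [Polynomial.degree_eq_natDegree ha, Nat.cast_withBot, WithBot.map_coe]
      exact_mod_cast mul_nonneg hδ.le (Int.ofNat_nonneg _)
    have : deg (b i) ≤ deg (a • b i) := by
      rw [hdeg]
      calc deg (b i) = 0 + deg (b i) := (zero_add _).symm
        _ ≤ _ := add_le_add_left hmap _
    exact absurd (this.trans hle) (not_le.mpr hi)
  -- Md is contained in the span of the basis vectors of degree ≤ d.
  have hMdle : Md ≤ Submodule.span R (b '' {i | deg (b i) ≤ (d : WithBot ℤ)}) := by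
    rw [hMdDef, Submodule.span_le]
    intro m hm
    obtain ⟨c, hc⟩ := (Submodule.mem_span_range_iff_exists_fun R).mp
      (hgen ▸ Submodule.mem_top : m ∈ Submodule.span R (Set.range b))
    have hsup : (Finset.univ.sup fun i => deg (c i • b i)) ≤ (d : WithBot ℤ) := by
      rw [← horth, hc]; exact hm
    have hterm : ∀ i, deg (c i • b i) ≤ (d : WithBot ℤ) := fun i =>
      (Finset.sup_le_iff.mp hsup) i (Finset.mem_univ i)
    rw [← hc]
    refine Submodule.sum_mem _ fun i _ => ?_
    by_cases hi : deg (b i) ≤ (d : WithBot ℤ)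
    · exact Submodule.smul_mem _ _ (Submodule.subset_span ⟨i, hi, rfl⟩)
    · rw [hcoef (c i) i (not_le.mp hi) (hterm i), zero_smul]
      exact Submodule.zero_mem _
  -- Key: if deg (b j) > d and a • b j ∈ Md then a = 0.
  have hkey : ∀ (j : Fin n), (d : WithBot ℤ) < deg (b j) → ∀ a : R, a • b j ∈ Md → a = 0 := by
    intro j hj a hmem
    obtain ⟨l, hls, hl⟩ := (Finsupp.mem_span_image_iff_linearCombination R).mp (hMdle hmem)
    have hl' : ∑ i, l i • b i = a • b j := by
      rw [← hl, Finsupp.linearCombination_apply, Finsupp.sum_fintype]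
      intro i; exact zero_smul _ _
    set e : Fin n → R := fun i => l i - (if i = j then a else 0) with he
    have hsum : ∑ i, e i • b i = 0 := by
      simp only [he, sub_smul, Finset.sum_sub_distrib, hl', ite_smul, zero_smul,
        Finset.sum_ite_eq' Finset.univ j, Finset.mem_univ, if_true, sub_self]
    have hbot : (Finset.univ.sup fun i => deg (e i • b i)) = ⊥ := by
      rw [← horth, hsum, (h0 0).mpr rfl]
    have hej : e j = 0 := by
      have : deg (e j • b j) = ⊥ := le_bot_iff.mp
        ((Finset.le_sup (Finset.mem_univ j)).trans_eq hbot)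
      rw [hdeg] at this
      rcases WithBot.add_eq_bot.mp this with h | h
      · exact Polynomial.degree_eq_bot.mp (WithBot.map_eq_bot_iff.mp h)
      · exact absurd (hne j) (not_not.mpr ((h0 (b j)).mp h))
    have hlj : l j = 0 := by
      by_contra hlj
      exact absurd hj (not_lt.mpr ((hls (Finsupp.mem_support_iff.mpr hlj) : _)))
    simpa [he, hlj] using hej.symm
  -- All basis vectors have degree ≤ d, else the quotient is infinite.
  have hall : ∀ j, deg (b j) ≤ (d : WithBot ℤ) := by
    by_contra hj
    push_neg at hj
    obtain ⟨j, hj⟩ := hj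
    have hinj : Function.Injective
        (fun a : R => Submodule.Quotient.mk (p := Md) (a • b j)) := by
      intro a a' h
      have hsub : (a - a') • b j ∈ Md := by
        rw [sub_smul]
        exact (Submodule.Quotient.eq Md).mp h
      exact sub_eq_zero.mp (hkey j hj (a - a') hsub)
    haveI : Infinite (M ⧸ Md) := Infinite.of_injective _ hinj
    exact absurd hfin (by exact fun _ => not_finite (M ⧸ Md))
  rw [eq_top_iff, ← hgen, Submodule.span_le]
  rintro x ⟨i, rfl⟩
  exact Submodule.subset_span (hall i)
end
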